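/- The polynomials P̃_n^{(α,c)} satisfy the structure relation x·(d/dx) P̃_n^{(α,c)}(x) = (n(n-1)/c³)·P̃_{n-2}^{(α,c)}(x) + (n(c(α+n)+1)/c²)·P̃_{n-1}^{(α,c)}(x) + n·P̃_n^{(α,c)}(x) for n ≥ 2. -/

import Mathlib

/-- Generalized Laguerre polynomial `L_n^{(α)}(x)` with real parameter `α`. -/
noncomputable def genLaguerre (n : ℕ) (α x : ℝ) : ℝ :=
  ∑ j ∈ Finset.range (n + 1),
    (-1) ^ j * ((∏ i ∈ Finset.range (n - j), (α + j + 1 + i)) / (Nat.factorial (n - j))) *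
      x ^ j / (Nat.factorial j)
/-- `P̃_n^{(α,c)}(x) = ((-1)^n / c^{2n}) ∑_{k=0}^n c^k (n-k+1)_k L_k^{(α)}(c x)`. -/
noncomputable def Pt (n : ℕ) (α c x : ℝ) : ℝ :=
  ((-1) ^ n / c ^ (2 * n)) *
    ∑ k ∈ Finset.range (n + 1),
      c ^ k * (∏ i ∈ Finset.range k, ((n : ℝ) - k + 1 + i)) * genLaguerre k α (c * x)

noncomputable def lagCoef (n j : ℕ) (α : ℝ) : ℝ :=
  (-1) ^ j * ((∏ i ∈ Finset.range (n - j), (α + j + 1 + i)) / (Nat.factorial (n - j)))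

lemma genLaguerre_eq (n : ℕ) (α x : ℝ) :
    genLaguerre n α x =
      ∑ j ∈ Finset.range (n + 1), lagCoef n j α * x ^ j / (Nat.factorial j) := rfl

noncomputable def Rr (m : ℝ) (k : ℕ) : ℝ := ∏ i ∈ Finset.range k, (m - k + 1 + i)

lemma Pt_eq (n : ℕ) (α c x : ℝ) :
    Pt n α c x = ((-1) ^ n / c ^ (2 * n)) *
      ∑ k ∈ Finset.range (n + 1), c ^ k * Rr (n : ℝ) k * genLaguerre k α (c * x) := rfl

lemma Rr_succ_left (m : ℝ) (k : ℕ) : Rr m (k + 1) = (m - k) * Rr m k := by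
  unfold Rr
  rw [Finset.prod_range_succ']
  push_cast
  rw [Finset.prod_congr rfl (fun i (_ : i ∈ Finset.range k) =>
    (by push_cast; ring : m - ((k:ℝ) + 1) + 1 + ((i:ℝ) + 1) = m - k + 1 + i))]
  ring

lemma Rr_succ_right (m : ℝ) (k : ℕ) : Rr m (k + 1) = m * Rr (m - 1) k := by
  unfold Rr
  rw [Finset.prod_range_succ]
  push_cast
  rw [Finset.prod_congr rfl (fun i (_ : i ∈ Finset.range k) =>
    (by push_cast; ring : m - ((k:ℝ) + 1) + 1 + (i:ℝ) = m - 1 - k + 1 + i))]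
  ring

lemma Rr_shift (m : ℝ) (k : ℕ) : (m - k) * Rr m k = m * Rr (m - 1) k := by
  rw [← Rr_succ_left, Rr_succ_right]

lemma Rr_zero (m : ℕ) (r : ℝ) (h : r = m) : Rr r (m + 1) = 0 := by
  unfold Rr
  apply Finset.prod_eq_zero (Finset.mem_range.mpr (Nat.succ_pos m))
  push_cast [h]; ring

lemma lagCoef_rel (k j : ℕ) (α : ℝ) (hj : j ≤ k) :
    ((k:ℝ) + 1 - j) * lagCoef (k+1) j α = ((k:ℝ) + 1 + α) * lagCoef k j α := by
  unfold lagCoef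
  obtain ⟨d, rfl⟩ : ∃ d, k = j + d := ⟨k - j, by omega⟩
  have h1 : j + d + 1 - j = d + 1 := by omega
  have h2 : j + d - j = d := by omega
  rw [h1, h2, Finset.prod_range_succ, Nat.factorial_succ]
  have hd : ((Nat.factorial d : ℝ)) ≠ 0 := Nat.cast_ne_zero.mpr (Nat.factorial_ne_zero d)
  push_cast
  field_simp
  ring

lemma G_succ (k : ℕ) (α t : ℝ) :
    ∑ j ∈ Finset.range (k+1+1), lagCoef (k+1) j α * ((j:ℝ) * t^j) / (Nat.factorial j)
      = ((k:ℝ)+1) * genLaguerre (k+1) α t - ((k:ℝ)+1+α) * genLaguerre k α t := by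
  have hmain : ∑ j ∈ Finset.range (k+1), lagCoef (k+1) j α * ((j:ℝ) * t^j) / (Nat.factorial j)
      = ∑ j ∈ Finset.range (k+1),
          (((k:ℝ)+1) * (lagCoef (k+1) j α * t^j / (Nat.factorial j))
            - ((k:ℝ)+1+α) * (lagCoef k j α * t^j / (Nat.factorial j))) := by
    refine Finset.sum_congr rfl fun j hj => ?_
    have h := lagCoef_rel k j α (Nat.lt_succ_iff.mp (Finset.mem_range.mp hj))
    linear_combination (-(t^j) / (Nat.factorial j : ℝ)) * h
  rw [genLaguerre_eq, genLaguerre_eq, Finset.mul_sum, Finset.mul_sum,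
    Finset.sum_range_succ (f := fun j => lagCoef (k+1) j α * ((j:ℝ) * t^j) / (Nat.factorial j : ℝ)) (n := k+1),
    Finset.sum_range_succ (f := fun j => ((k:ℝ)+1) * (lagCoef (k+1) j α * t^j / (Nat.factorial j : ℝ))) (n := k+1),
    hmain, Finset.sum_sub_distrib]
  push_cast
  ring

lemma hasDerivAt_gen (k : ℕ) (α c x : ℝ) :
    HasDerivAt (fun y => genLaguerre k α (c*y))
      (∑ j ∈ Finset.range (k+1), lagCoef k j α * ((j:ℝ) * (c*x)^(j-1) * c) / (Nat.factorial j)) x := by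
  have h : (fun y => genLaguerre k α (c*y))
      = fun y => ∑ j ∈ Finset.range (k+1), lagCoef k j α * (c*y)^j / (Nat.factorial j) := by
    funext y; rw [genLaguerre_eq]
  rw [h]
  apply HasDerivAt.fun_sum
  intro j _
  have hcy : HasDerivAt (fun y : ℝ => c * y) (c * 1) x := (hasDerivAt_id x).const_mul c
  have := ((hcy.pow j).const_mul (lagCoef k j α)).div_const ((Nat.factorial j : ℝ))
  simpa using this

lemma hasDerivAt_Pt (n : ℕ) (α c x : ℝ) :
    HasDerivAt (fun y => Pt n α c y)
      (((-1)^n / c^(2*n)) * ∑ k ∈ Finset.range (n+1), c^k * Rr (n:ℝ) k *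
        (∑ j ∈ Finset.range (k+1), lagCoef k j α * ((j:ℝ) * (c*x)^(j-1) * c) / (Nat.factorial j))) x := by
  have h : (fun y => Pt n α c y) = fun y => ((-1:ℝ)^n / c^(2*n)) *
      ∑ k ∈ Finset.range (n+1), c^k * Rr (n:ℝ) k * genLaguerre k α (c*y) := by
    funext y; rw [Pt_eq]
  rw [h]
  exact HasDerivAt.const_mul _ (HasDerivAt.fun_sum fun k _ => (hasDerivAt_gen k α c x).const_mul _)

lemma x_deriv_Pt (n : ℕ) (α c x : ℝ) :
    x * deriv (fun y => Pt n α c y) x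
      = ((-1)^n / c^(2*n)) * ∑ k ∈ Finset.range (n+1), c^k * Rr (n:ℝ) k *
          (∑ j ∈ Finset.range (k+1), lagCoef k j α * ((j:ℝ) * (c*x)^j) / (Nat.factorial j)) := by
  rw [(hasDerivAt_Pt n α c x).deriv, mul_left_comm]
  congr 1
  rw [Finset.mul_sum]
  refine Finset.sum_congr rfl fun k _ => ?_
  rw [mul_left_comm]
  congr 1
  rw [Finset.mul_sum]
  refine Finset.sum_congr rfl fun j _ => ?_
  cases j with
  | zero => simp
  | succ jj =>
      rw [Nat.add_sub_cancel, pow_succ]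
      push_cast
      ring

lemma G_sum (n : ℕ) (α c x : ℝ) :
    ∑ k ∈ Finset.range (n+1), c^k * Rr (n:ℝ) k *
        (∑ j ∈ Finset.range (k+1), lagCoef k j α * ((j:ℝ) * (c*x)^j) / (Nat.factorial j))
      = ∑ k ∈ Finset.range n, c^(k+1) * Rr (n:ℝ) (k+1) *
          (((k:ℝ)+1) * genLaguerre (k+1) α (c*x) - ((k:ℝ)+1+α) * genLaguerre k α (c*x)) := by
  rw [Finset.sum_range_succ']
  simp only [G_succ]
  simp [Rr]


lemma star (m : ℕ) (α c x : ℝ) :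
    ∑ k ∈ Finset.range (m+2), c^(k+1) * Rr ((m:ℝ)+2) (k+1) *
        (((k:ℝ)+1) * genLaguerre (k+1) α (c*x) - ((k:ℝ)+1+α) * genLaguerre k α (c*x))
      = ((m:ℝ)+2)*((m:ℝ)+1)*c *
          (∑ k ∈ Finset.range (m+1), c^k * Rr (m:ℝ) k * genLaguerre k α (c*x))
        - ((m:ℝ)+2)*(c*(α+((m:ℝ)+2))+1) *
          (∑ k ∈ Finset.range (m+1+1), c^k * Rr ((m:ℝ)+1) k * genLaguerre k α (c*x))
        + ((m:ℝ)+2) *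
          (∑ k ∈ Finset.range (m+2+1), c^k * Rr ((m:ℝ)+2) k * genLaguerre k α (c*x)) := by
  have t1 : ∀ k : ℕ, ((m:ℝ)+2-k) * Rr ((m:ℝ)+2) k = ((m:ℝ)+2) * Rr ((m:ℝ)+1) k := by
    intro k
    have h := Rr_shift ((m:ℝ)+2) k
    rwa [show (m:ℝ)+2-1 = (m:ℝ)+1 by ring] at h
  have t0 : ∀ k : ℕ, ((m:ℝ)+1-k) * Rr ((m:ℝ)+1) k = ((m:ℝ)+1) * Rr (m:ℝ) k := by
    intro k
    have h := Rr_shift ((m:ℝ)+1) k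
    rwa [show (m:ℝ)+1-1 = (m:ℝ) by ring] at h
  have t2 : ∀ k : ℕ, Rr ((m:ℝ)+2) (k+1) = ((m:ℝ)+2) * Rr ((m:ℝ)+1) k := by
    intro k
    have h := Rr_succ_right ((m:ℝ)+2) k
    rwa [show (m:ℝ)+2-1 = (m:ℝ)+1 by ring] at h
  have h0 : Rr ((m:ℝ)+1) (m+2) = 0 := by
    unfold Rr
    refine Finset.prod_eq_zero (i := 0) (by simp) ?_
    push_cast
    ring
  have h0' : Rr (m:ℝ) (m+1) = 0 := by
    unfold Rr
    refine Finset.prod_eq_zero (i := 0) (by simp) ?_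
    push_cast
    ring
  have split : ∑ k ∈ Finset.range (m+2), c^(k+1) * Rr ((m:ℝ)+2) (k+1) *
        (((k:ℝ)+1) * genLaguerre (k+1) α (c*x) - ((k:ℝ)+1+α) * genLaguerre k α (c*x))
      = (∑ k ∈ Finset.range (m+2), c^(k+1) * Rr ((m:ℝ)+2) (k+1) *
          (((k:ℝ)+1) * genLaguerre (k+1) α (c*x)))
        - (∑ k ∈ Finset.range (m+2), c^(k+1) * Rr ((m:ℝ)+2) (k+1) *
          (((k:ℝ)+1+α) * genLaguerre k α (c*x))) := by
    rw [← Finset.sum_sub_distrib]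
    exact Finset.sum_congr rfl fun k _ => by ring
  have eA : ∑ k ∈ Finset.range (m+2), c^(k+1) * Rr ((m:ℝ)+2) (k+1) *
        (((k:ℝ)+1) * genLaguerre (k+1) α (c*x))
      = ∑ k ∈ Finset.range (m+2+1), (k:ℝ) * (c^k * Rr ((m:ℝ)+2) k * genLaguerre k α (c*x)) := by
    rw [Finset.sum_range_succ'
      (f := fun k => (k:ℝ) * (c^k * Rr ((m:ℝ)+2) k * genLaguerre k α (c*x))) (n := m+2)]
    simp only [Nat.cast_zero, zero_mul, add_zero]
    refine Finset.sum_congr rfl fun k _ => ?_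
    push_cast
    ring
  have eA2 : ∑ k ∈ Finset.range (m+2+1), (k:ℝ) * (c^k * Rr ((m:ℝ)+2) k * genLaguerre k α (c*x))
      = ((m:ℝ)+2) * (∑ k ∈ Finset.range (m+2+1), c^k * Rr ((m:ℝ)+2) k * genLaguerre k α (c*x))
        - ((m:ℝ)+2) * (∑ k ∈ Finset.range (m+2+1), c^k * Rr ((m:ℝ)+1) k * genLaguerre k α (c*x)) := by
    rw [Finset.mul_sum, Finset.mul_sum, ← Finset.sum_sub_distrib]
    refine Finset.sum_congr rfl fun k _ => ?_
    linear_combination (-(c^k * genLaguerre k α (c*x))) * t1 k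
  have eS1 : ∑ k ∈ Finset.range (m+2+1), c^k * Rr ((m:ℝ)+1) k * genLaguerre k α (c*x)
      = ∑ k ∈ Finset.range (m+1+1), c^k * Rr ((m:ℝ)+1) k * genLaguerre k α (c*x) := by
    rw [Finset.sum_range_succ
      (f := fun k => c^k * Rr ((m:ℝ)+1) k * genLaguerre k α (c*x)) (n := m+2), h0]
    ring
  have eB : ∑ k ∈ Finset.range (m+2), c^(k+1) * Rr ((m:ℝ)+2) (k+1) *
        (((k:ℝ)+1+α) * genLaguerre k α (c*x))
      = ((m:ℝ)+2)*(c*(α+((m:ℝ)+2))) *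
          (∑ k ∈ Finset.range (m+1+1), c^k * Rr ((m:ℝ)+1) k * genLaguerre k α (c*x))
        - ((m:ℝ)+2)*((m:ℝ)+1)*c *
          (∑ k ∈ Finset.range (m+1+1), c^k * Rr (m:ℝ) k * genLaguerre k α (c*x)) := by
    rw [Finset.mul_sum, Finset.mul_sum, ← Finset.sum_sub_distrib]
    refine Finset.sum_congr rfl fun k _ => ?_
    rw [t2 k]
    linear_combination (-(c^(k+1) * genLaguerre k α (c*x) * ((m:ℝ)+2))) * t0 k
  have eS0 : ∑ k ∈ Finset.range (m+1+1), c^k * Rr (m:ℝ) k * genLaguerre k α (c*x)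
      = ∑ k ∈ Finset.range (m+1), c^k * Rr (m:ℝ) k * genLaguerre k α (c*x) := by
    rw [Finset.sum_range_succ
      (f := fun k => c^k * Rr (m:ℝ) k * genLaguerre k α (c*x)) (n := m+1), h0']
    ring
  rw [split, eA, eA2, eS1, eB, eS0]
  ring

theorem Pt_structure_relation (n : ℕ) (hn : 2 ≤ n) (α c x : ℝ) (hc : c ≠ 0) :
    x * deriv (fun y => Pt n α c y) x =
      ((n : ℝ) * ((n : ℝ) - 1) / c ^ 3) * Pt (n - 2) α c x +
        ((n : ℝ) * (c * (α + n) + 1) / c ^ 2) * Pt (n - 1) α c x +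
        (n : ℝ) * Pt n α c x := by
  obtain ⟨m, rfl⟩ : ∃ m, n = m + 2 := ⟨n - 2, by omega⟩
  have h2 : m + 2 - 2 = m := by omega
  have h1 : m + 2 - 1 = m + 1 := by omega
  rw [h2, h1, x_deriv_Pt, G_sum]
  simp only [Pt_eq]
  push_cast
  rw [star m α c x]
  field_simp
  ring
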